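/- Let Q(u,v) = k·u^{δ(1−βρ)}·((ρ−1)u+v)^{βδρ} be a 2-input VES production function on the domain D = {(u,v) ∈ ℝ² : u>0, v>0, (ρ−1)u+v>0}, with parameters satisfying k>0, 0<β<1, 0<βρ<1, δ>0. Then the Gaussian curvature K of the graph surface {(u,v,Q(u,v)) : (u,v) ∈ D} is strictly negative at every point of D if and only if δ > 1 (i.e., the VES production function has increasing returns to scale if and only if the VES surface has negative Gaussian curvature). -/

import Mathlib

open Real Filter

/-- Partial derivative in the first variable. -/
noncomputable def pdu (f : ℝ → ℝ → ℝ) : ℝ → ℝ → ℝ := fun u v => deriv (fun x => f x v) u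

/-- Partial derivative in the second variable. -/
noncomputable def pdv (f : ℝ → ℝ → ℝ) : ℝ → ℝ → ℝ := fun u v => deriv (fun y => f u y) v

/-- Hessian determinant `f_uu · f_vv − f_uv²` of `f` at `(u, v)`. -/
noncomputable def hessDet (f : ℝ → ℝ → ℝ) (u v : ℝ) : ℝ :=
  pdu (pdu f) u v * pdv (pdv f) u v - pdv (pdu f) u v ^ 2

/-- Gaussian curvature of the graph surface `{(u, v, f u v)}` at `(u, v)`:
`K = (f_uu · f_vv − f_uv²) / (1 + f_u² + f_v²)²`. -/
noncomputable def gaussK (f : ℝ → ℝ → ℝ) (u v : ℝ) : ℝ :=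
  hessDet f u v / (1 + pdu f u v ^ 2 + pdv f u v ^ 2) ^ 2

/-- The 2-input VES production function
`Q(u,v) = k · u^(δ(1−βρ)) · ((ρ−1)u + v)^(βδρ)`. -/
noncomputable def QVES (k β ρ δ : ℝ) : ℝ → ℝ → ℝ := fun u v =>
  k * u ^ (δ * (1 - β * ρ)) * ((ρ - 1) * u + v) ^ (β * δ * ρ)

lemma hd1 (k p q c v u : ℝ) (hu : 0 < u) (hw : 0 < c * u + v) :
    HasDerivAt (fun x => k * x ^ p * (c * x + v) ^ q)
      (k * p * u ^ (p - 1) * (c * u + v) ^ q + k * c * q * u ^ p * (c * u + v) ^ (q - 1)) u := by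
  have h1 : HasDerivAt (fun x : ℝ => x ^ p) (p * u ^ (p - 1)) u :=
    Real.hasDerivAt_rpow_const (Or.inl hu.ne')
  have h2 : HasDerivAt (fun x : ℝ => c * x + v) c u := by
    simpa using ((hasDerivAt_id u).const_mul c).add_const v
  have h3 : HasDerivAt (fun x => (c * x + v) ^ q) (c * q * (c * u + v) ^ (q - 1)) u :=
    h2.rpow_const (Or.inl hw.ne')
  have := (h1.const_mul k).fun_mul h3
  refine this.congr_deriv ?_
  ring

lemma hd2 (A q d v : ℝ) (hw : 0 < d + v) :
    HasDerivAt (fun y => A * (d + y) ^ q) (A * q * (d + v) ^ (q - 1)) v := by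
  have h2 : HasDerivAt (fun y : ℝ => d + y) 1 v := by
    simpa using (hasDerivAt_id v).const_add d
  have h3 : HasDerivAt (fun y => (d + y) ^ q) (1 * q * (d + v) ^ (q - 1)) v :=
    h2.rpow_const (Or.inl hw.ne')
  have := h3.const_mul A
  refine this.congr_deriv ?_
  ring

lemma pdu_eq (k p q c u v : ℝ) (hu : 0 < u) (hw : 0 < c * u + v) :
    pdu (fun x y => k * x ^ p * (c * x + y) ^ q) u v
      = k * p * u ^ (p - 1) * (c * u + v) ^ q + k * c * q * u ^ p * (c * u + v) ^ (q - 1) :=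
  (hd1 k p q c v u hu hw).deriv

lemma pdv_eq (k p q c u v : ℝ) (hu : 0 < u) (hw : 0 < c * u + v) :
    pdv (fun x y => k * x ^ p * (c * x + y) ^ q) u v
      = k * q * u ^ p * (c * u + v) ^ (q - 1) := by
  have h : HasDerivAt (fun y => (k * u ^ p) * (c * u + y) ^ q)
      ((k * u ^ p) * q * (c * u + v) ^ (q - 1)) v := hd2 (k * u ^ p) q (c * u) v hw
  have := h.deriv
  unfold pdv
  rw [this]; ring

lemma ev_pos (c u v : ℝ) (hw : 0 < c * u + v) : ∀ᶠ x in nhds u, 0 < c * x + v := by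
  have hc : ContinuousAt (fun x : ℝ => c * x + v) u := by fun_prop
  exact hc.eventually (eventually_gt_nhds hw)

lemma ev_pos' (c u v : ℝ) (hw : 0 < c * u + v) : ∀ᶠ y in nhds v, 0 < c * u + y := by
  have hc : ContinuousAt (fun y : ℝ => c * u + y) v := by fun_prop
  exact hc.eventually (eventually_gt_nhds hw)

lemma pduu_eq (k p q c u v : ℝ) (hu : 0 < u) (hw : 0 < c * u + v) :
    pdu (pdu (fun x y => k * x ^ p * (c * x + y) ^ q)) u v
      = k * p * (p - 1) * u ^ (p - 2) * (c * u + v) ^ q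
        + 2 * k * p * c * q * u ^ (p - 1) * (c * u + v) ^ (q - 1)
        + k * c ^ 2 * q * (q - 1) * u ^ p * (c * u + v) ^ (q - 2) := by
  have hev : (fun x => pdu (fun x y => k * x ^ p * (c * x + y) ^ q) x v)
      =ᶠ[nhds u] fun x =>
        (k * p) * x ^ (p - 1) * (c * x + v) ^ q + (k * c * q) * x ^ p * (c * x + v) ^ (q - 1) := by
    filter_upwards [eventually_gt_nhds hu, ev_pos c u v hw] with x hx1 hx2
    rw [pdu_eq k p q c x v hx1 hx2]
  show deriv (fun x => pdu (fun x y => k * x ^ p * (c * x + y) ^ q) x v) u = _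
  rw [hev.deriv_eq]
  have h1 := hd1 (k * p) (p - 1) q c v u hu hw
  have h2 := hd1 (k * c * q) p (q - 1) c v u hu hw
  rw [(h1.fun_add h2).deriv]
  have e1 : p - 1 - 1 = p - 2 := by ring
  rw [e1]; ring

lemma pduv_eq (k p q c u v : ℝ) (hu : 0 < u) (hw : 0 < c * u + v) :
    pdv (pdu (fun x y => k * x ^ p * (c * x + y) ^ q)) u v
      = k * p * q * u ^ (p - 1) * (c * u + v) ^ (q - 1)
        + k * c * q * (q - 1) * u ^ p * (c * u + v) ^ (q - 2) := by
  have hev : (fun y => pdu (fun x y => k * x ^ p * (c * x + y) ^ q) u y)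
      =ᶠ[nhds v] fun y =>
        (k * p * u ^ (p - 1)) * (c * u + y) ^ q
          + (k * c * q * u ^ p) * (c * u + y) ^ (q - 1) := by
    filter_upwards [ev_pos' c u v hw] with y hy
    rw [pdu_eq k p q c u y hu hy]
  show deriv (fun y => pdu (fun x y => k * x ^ p * (c * x + y) ^ q) u y) v = _
  rw [hev.deriv_eq]
  have h1 := hd2 (k * p * u ^ (p - 1)) q (c * u) v hw
  have h2 := hd2 (k * c * q * u ^ p) (q - 1) (c * u) v hw
  rw [(h1.fun_add h2).deriv]
  have e1 : q - 1 - 1 = q - 2 := by ring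
  rw [e1]; ring

lemma pdvv_eq (k p q c u v : ℝ) (hu : 0 < u) (hw : 0 < c * u + v) :
    pdv (pdv (fun x y => k * x ^ p * (c * x + y) ^ q)) u v
      = k * q * (q - 1) * u ^ p * (c * u + v) ^ (q - 2) := by
  have hev : (fun y => pdv (fun x y => k * x ^ p * (c * x + y) ^ q) u y)
      =ᶠ[nhds v] fun y => (k * q * u ^ p) * (c * u + y) ^ (q - 1) := by
    filter_upwards [ev_pos' c u v hw] with y hy
    rw [pdv_eq k p q c u y hu hy]
  show deriv (fun y => pdv (fun x y => k * x ^ p * (c * x + y) ^ q) u y) v = _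
  rw [hev.deriv_eq]
  have h1 := hd2 (k * q * u ^ p) (q - 1) (c * u) v hw
  rw [h1.deriv]
  have e1 : q - 1 - 1 = q - 2 := by ring
  rw [e1]; ring

lemma hess_eq (k p q c u v : ℝ) (hu : 0 < u) (hw : 0 < c * u + v) :
    hessDet (fun x y => k * x ^ p * (c * x + y) ^ q) u v
      = k ^ 2 * p * q * (1 - p - q) * (u ^ (p - 1)) ^ 2 * ((c * u + v) ^ (q - 1)) ^ 2 := by
  rw [hessDet, pduu_eq k p q c u v hu hw, pdvv_eq k p q c u v hu hw,
    pduv_eq k p q c u v hu hw]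
  have e1 : u ^ (p - 2) = u ^ (p - 1) / u := by
    rw [show p - 2 = p - 1 - 1 by ring, Real.rpow_sub hu, Real.rpow_one]
  have e2 : u ^ p = u ^ (p - 1) * u := by
    have h : u ^ (p - 1) = u ^ p / u := by
      rw [Real.rpow_sub hu, Real.rpow_one]
    rw [h]; field_simp
  have e3 : (c * u + v) ^ (q - 2) = (c * u + v) ^ (q - 1) / (c * u + v) := by
    rw [show q - 2 = q - 1 - 1 by ring, Real.rpow_sub hw, Real.rpow_one]
  have e4 : (c * u + v) ^ q = (c * u + v) ^ (q - 1) * (c * u + v) := by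
    have h : (c * u + v) ^ (q - 1) = (c * u + v) ^ q / (c * u + v) := by
      rw [Real.rpow_sub hw, Real.rpow_one]
    rw [h]; field_simp
  rw [e1, e2, e3, e4]
  have hu' := hu.ne'
  have hw' := hw.ne'
  set w := c * u + v with hwdef
  field_simp
  ring

lemma gaussK_neg_iff (f : ℝ → ℝ → ℝ) (u v : ℝ) :
    gaussK f u v < 0 ↔ hessDet f u v < 0 := by
  unfold gaussK
  have h : 0 < (1 + pdu f u v ^ 2 + pdv f u v ^ 2) ^ 2 := by positivity
  rw [div_neg_iff]
  constructor
  · rintro (⟨_, hb⟩ | ⟨ha, _⟩)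
    · linarith
    · exact ha
  · intro hd
    exact Or.inr ⟨hd, h⟩

/-- The VES production function has increasing returns to scale (`δ > 1`) if and only if
the VES surface has strictly negative Gaussian curvature at every point of the domain
`D = {(u,v) : u > 0, v > 0, (ρ−1)u + v > 0}`. -/
theorem ves_negative_curvature_iff_increasing_returns
    (k β ρ δ : ℝ) (hk : 0 < k) (hβ0 : 0 < β) (hβ1 : β < 1)
    (hβρ0 : 0 < β * ρ) (hβρ1 : β * ρ < 1) (hδ : 0 < δ) :
    (∀ u v : ℝ, 0 < u → 0 < v → 0 < (ρ - 1) * u + v →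
      gaussK (QVES k β ρ δ) u v < 0) ↔ 1 < δ := by
  have hQ : QVES k β ρ δ
      = fun x y => k * x ^ (δ * (1 - β * ρ)) * ((ρ - 1) * x + y) ^ (β * δ * ρ) := rfl
  have hp : 0 < δ * (1 - β * ρ) := mul_pos hδ (by linarith)
  have hq : 0 < β * δ * ρ := by nlinarith
  have hkpq : 0 < k ^ 2 * (δ * (1 - β * ρ)) * (β * δ * ρ) :=
    mul_pos (mul_pos (pow_pos hk 2) hp) hq
  have hsum : 1 - (δ * (1 - β * ρ)) - (β * δ * ρ) = 1 - δ := by ring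
  constructor
  · intro h
    have hρ : 0 < ρ := by nlinarith
    have hw1 : (0:ℝ) < (ρ - 1) * 1 + 1 := by linarith
    have hg := h 1 1 one_pos one_pos hw1
    have hd := (gaussK_neg_iff (QVES k β ρ δ) 1 1).mp hg
    rw [hQ, hess_eq k (δ * (1 - β * ρ)) (β * δ * ρ) (ρ - 1) 1 1 one_pos hw1, hsum] at hd
    have hX : (0:ℝ) < (1:ℝ) ^ (δ * (1 - β * ρ) - 1) := rpow_pos_of_pos one_pos _
    have hY : (0:ℝ) < ((ρ - 1) * 1 + 1) ^ (β * δ * ρ - 1) := rpow_pos_of_pos hw1 _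
    by_contra hle
    push_neg at hle
    have h1 : (0:ℝ) ≤ 1 - δ := by linarith
    have : 0 ≤ k ^ 2 * (δ * (1 - β * ρ)) * (β * δ * ρ) * (1 - δ)
        * ((1:ℝ) ^ (δ * (1 - β * ρ) - 1)) ^ 2
        * (((ρ - 1) * 1 + 1) ^ (β * δ * ρ - 1)) ^ 2 :=
      mul_nonneg (mul_nonneg (mul_nonneg hkpq.le h1) (sq_nonneg _)) (sq_nonneg _)
    linarith
  · intro hδ1 u v hu hv hw
    rw [gaussK_neg_iff, hQ,
      hess_eq k (δ * (1 - β * ρ)) (β * δ * ρ) (ρ - 1) u v hu hw, hsum]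
    have hX : (0:ℝ) < u ^ (δ * (1 - β * ρ) - 1) := rpow_pos_of_pos hu _
    have hY : (0:ℝ) < ((ρ - 1) * u + v) ^ (β * δ * ρ - 1) := rpow_pos_of_pos hw _
    have hC : k ^ 2 * (δ * (1 - β * ρ)) * (β * δ * ρ) * (1 - δ) < 0 :=
      mul_neg_of_pos_of_neg hkpq (by linarith)
    exact mul_neg_of_neg_of_pos (mul_neg_of_neg_of_pos hC (pow_pos hX 2)) (pow_pos hY 2)
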